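/- For any filter D on a set κ, the cardinal reg(D) = min{θ : D is not θ-regular} is a regular cardinal. -/

import Mathlib

universe u v
universe w
open Cardinal Ordinal Set

/-- The filter `D` is `θ`-regular: there are sets `A ε ∈ D` for `ε < θ` such that
the intersection of any infinitely many of them is empty. -/
def IsRegularFilter {κ : Type u} (D : Filter κ) (θ : Cardinal.{v}) : Prop :=
  ∃ A : Ordinal.{v} → Set κ,
    (∀ ε : Ordinal.{v}, ε < θ.ord → A ε ∈ D) ∧
    ∀ T : Set Ordinal.{v}, T ⊆ Set.Iio θ.ord → T.Infinite → ⋂ ε ∈ T, A ε = ∅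

def Reg {κ : Type u} (D : Filter κ) (ι : Type v) : Prop :=
  ∃ A : ι → Set κ, (∀ i, A i ∈ D) ∧ ∀ T : Set ι, T.Infinite → ⋂ i ∈ T, A i = ∅

lemma reg_of_inj {κ : Type u} (D : Filter κ) {ι : Type v} {σ : Type w}
    (g : σ → ι) (hg : Function.Injective g) (h : Reg D ι) : Reg D σ := by
  obtain ⟨A, hA1, hA2⟩ := h
  refine ⟨A ∘ g, fun i => hA1 _, fun T hT => ?_⟩
  have h2 := hA2 (g '' T) (hT.image hg.injOn)
  rwa [Set.biInter_image] at h2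

lemma regFilter_of_reg {κ : Type u} (D : Filter κ) (θ : Cardinal.{v})
    (h : Reg D (Set.Iio θ.ord)) : IsRegularFilter D θ := by
  obtain ⟨A, hA1, hA2⟩ := h
  refine ⟨fun ε => if h : ε < θ.ord then A ⟨ε, h⟩ else Set.univ,
    fun ε hε => by simpa [hε] using hA1 ⟨ε, hε⟩, fun T hsub hTinf => ?_⟩
  have hT' : (Subtype.val ⁻¹' T : Set (Set.Iio θ.ord)).Infinite := by
    apply hTinf.preimage
    rwa [Subtype.range_val]
  have h2 := hA2 _ hT'
  apply Set.eq_empty_of_subset_empty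
  rw [← h2]
  intro x hx
  simp only [Set.mem_iInter] at hx ⊢
  rintro ⟨y, hy⟩ hyT
  have hh := hx y hyT
  rwa [dif_pos (show y < θ.ord from hy)] at hh

lemma reg_of_regFilter {κ : Type u} (D : Filter κ) (θ : Cardinal.{v})
    (h : IsRegularFilter D θ) : Reg D (Set.Iio θ.ord) := by
  obtain ⟨A, hA1, hA2⟩ := h
  refine ⟨fun x => A x.1, fun x => hA1 _ x.2, fun T hT => ?_⟩
  have h2 := hA2 (Subtype.val '' T) (by rintro x ⟨y, hy, rfl⟩; exact y.2)
    (hT.image Subtype.val_injective.injOn)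
  rwa [Set.biInter_image] at h2

lemma regFilter_mono {κ : Type u} (D : Filter κ) {θ' θ : Cardinal.{v}} (hle : θ' ≤ θ)
    (h : IsRegularFilter D θ) : IsRegularFilter D θ' := by
  apply regFilter_of_reg
  exact reg_of_inj D (Set.inclusion (Set.Iio_subset_Iio (Cardinal.ord_le_ord.2 hle)))
    (Set.inclusion_injective _) (reg_of_regFilter D θ h)

lemma regFilter_of_lt_aleph0 {κ : Type u} (D : Filter κ) {θ : Cardinal.{v}} (h : θ < ℵ₀) :
    IsRegularFilter D θ := by
  refine ⟨fun _ => Set.univ, fun _ _ => Filter.univ_mem, fun T hsub hinf => absurd hinf ?_⟩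
  rw [Set.not_infinite]
  apply Set.Finite.subset _ hsub
  rw [← Set.not_infinite, ← Set.infinite_coe_iff]
  intro hi
  have : (ℵ₀ : Cardinal.{v+1}) ≤ #(Set.Iio θ.ord) := Cardinal.aleph0_le_mk _
  rw [Ordinal.mk_Iio_ordinal, Cardinal.card_ord] at this
  exact absurd this (not_le.2 (Cardinal.lift_lt_aleph0.2 h))

noncomputable def iioEquiv (o : Ordinal.{u}) : Set.Iio o ≃ Set.Iio o.card.ord :=
  (Ordinal.ToType.mk (o := o)).toEquiv.trans <|
    (Classical.choice (Cardinal.eq.1 (by rw [Cardinal.mk_toType, Cardinal.mk_ord_toType]) :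
      Nonempty (o.ToType ≃ o.card.ord.ToType))).trans
    (Ordinal.ToType.mk (o := o.card.ord)).toEquiv.symm

lemma reg_sigma {κ : Type u} (D : Filter κ) {ι : Type v} {β : ι → Type w}
    (hB : Reg D ι) (hA : ∀ i, Reg D (β i)) : Reg D (Σ i, β i) := by
  obtain ⟨B, hB1, hB2⟩ := hB
  choose A hA1 hA2 using hA
  refine ⟨fun x => B x.1 ∩ A x.1 x.2, fun x => Filter.inter_mem (hB1 _) (hA1 _ _),
    fun T hT => ?_⟩
  apply Set.eq_empty_iff_forall_notMem.2
  intro x hx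
  rw [Set.mem_iInter₂] at hx
  by_cases hI : (Sigma.fst '' T).Infinite
  · have hmem : x ∈ ⋂ i ∈ Sigma.fst '' T, B i := by
      rw [Set.biInter_image]
      exact Set.mem_iInter₂.2 fun s hs => (hx s hs).1
    rw [hB2 _ hI] at hmem
    exact hmem
  · have hfib : ∃ i, (Sigma.mk i ⁻¹' T).Infinite := by
      by_contra hc
      push_neg at hc
      apply hT
      have hsub : T ⊆ ⋃ i ∈ Sigma.fst '' T, Sigma.mk i '' (Sigma.mk i ⁻¹' T) := by
        rintro ⟨i, b⟩ hxT
        exact Set.mem_biUnion ⟨⟨i, b⟩, hxT, rfl⟩ ⟨b, hxT, rfl⟩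
      exact Set.Finite.subset
        (Set.Finite.biUnion (Set.not_infinite.1 hI) fun i _ => (hc i).image _) hsub
    obtain ⟨i, hi⟩ := hfib
    have hmem : x ∈ ⋂ b ∈ Sigma.mk i ⁻¹' T, A i b :=
      Set.mem_iInter₂.2 fun b hb => (hx _ hb).2
    rw [hA2 i _ hi] at hmem
    exact hmem

lemma exists_not_regFilter {κ : Type u} (D : Filter κ) [D.NeBot] :
    ∃ θ : Cardinal.{u}, ¬ IsRegularFilter D θ := by
  set μ : Cardinal.{u} := 2 ^ #κ + ℵ₀ with hμ
  refine ⟨Order.succ μ, fun h => ?_⟩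
  obtain ⟨A, hA1, hA2⟩ := h
  set θ₀ := Order.succ μ with hθ₀
  let α := ULift.{u+1} (Set κ ⊕ ℕ)
  let f : Set.Iio θ₀.ord → α := fun ε => ⟨Sum.inl (A ε.1)⟩
  have hα : #α = Cardinal.lift.{u+1} μ := by
    simp [α, hμ, Cardinal.mk_uLift, Cardinal.mk_sum, Cardinal.mk_set,
      Cardinal.lift_add, Cardinal.lift_lift]
  have hcard : #α < #(Set.Iio θ₀.ord) := by
    rw [Ordinal.mk_Iio_ordinal, Cardinal.card_ord, hα]
    exact Cardinal.lift_lt.2 (Order.lt_succ μ)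
  obtain ⟨a, ha⟩ := Cardinal.exists_infinite_fiber' f hcard
  have hset : (f ⁻¹' {a}).Infinite := Set.infinite_coe_iff.mp ha
  obtain ⟨x0, hx0⟩ := hset.nonempty
  have hSD : A x0.1 ∈ D := hA1 _ x0.2
  obtain ⟨y, hy⟩ := D.nonempty_of_mem hSD
  have hT : Subtype.val '' (f ⁻¹' {a}) ⊆ Set.Iio θ₀.ord := by
    rintro x ⟨z, hz, rfl⟩; exact z.2
  have h2 := hA2 _ hT (hset.image Subtype.val_injective.injOn)
  have hmem : y ∈ ⋂ ε ∈ Subtype.val '' (f ⁻¹' {a}), A ε := by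
    apply Set.mem_iInter₂.2
    rintro _ ⟨z, hz, rfl⟩
    have heq : f z = f x0 := by
      rw [Set.mem_preimage, Set.mem_singleton_iff] at hz hx0
      rw [hz, hx0]
    have : A z.1 = A x0.1 := Sum.inl.inj (congrArg ULift.down heq)
    rw [this]; exact hy
  rw [h2] at hmem
  exact hmem

/-- `reg(D) = min{θ : D is not θ-regular}` is a regular cardinal. -/
theorem stmt_10 {κ : Type u} (D : Filter κ) [D.NeBot] :
    (sInf {θ : Cardinal.{u} | ¬ IsRegularFilter D θ}).IsRegular := by
  set S := {θ : Cardinal.{u} | ¬ IsRegularFilter D θ} with hS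
  have hne : S.Nonempty := exists_not_regFilter D
  have hmem : sInf S ∈ S := csInf_mem hne
  have hreg : ∀ c : Cardinal.{u}, c < sInf S → IsRegularFilter D c := fun c hc =>
    not_not.1 (notMem_of_lt_csInf hc (OrderBot.bddBelow S))
  have h0 : ℵ₀ ≤ sInf S := le_csInf hne fun b hb =>
    le_of_not_gt fun hlt => hb (regFilter_of_lt_aleph0 D hlt)
  refine ⟨h0, ?_⟩
  by_contra hcf
  push_neg at hcf
  apply hmem
  set θ := sInf S with hθ
  obtain ⟨ι, f, hlsub, hι⟩ := Ordinal.exists_lsub_cof θ.ord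
  have hlam : IsRegularFilter D θ.ord.cof := hreg _ hcf
  have hι' : Reg D ι := by
    have e : ι ≃ θ.ord.cof.ord.ToType :=
      Classical.choice (Cardinal.eq.1 (by rw [hι, Cardinal.mk_ord_toType]))
    exact reg_of_inj D (fun i => (Ordinal.ToType.mk (o := θ.ord.cof.ord)).symm (e i))
      (((Ordinal.ToType.mk (o := θ.ord.cof.ord)).symm.injective).comp e.injective)
      (reg_of_regFilter D _ hlam)
  have hlim := Cardinal.isSuccLimit_ord h0
  have hblocks : ∀ i : ι, Reg D (Set.Iio (Order.succ (f i))) := by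
    intro i
    have h1 : f i < θ.ord := hlsub ▸ Ordinal.lt_lsub f i
    have h2 : Order.succ (f i) < θ.ord := hlim.succ_lt h1
    have h3 : (Order.succ (f i)).card < θ := Cardinal.lt_ord.1 h2
    exact reg_of_inj D (iioEquiv (Order.succ (f i))) (Equiv.injective _)
      (reg_of_regFilter D _ (hreg _ h3))
  have hσ : Reg D (Σ i : ι, Set.Iio (Order.succ (f i))) := reg_sigma D hι' hblocks
  have hg : ∀ ε : Set.Iio θ.ord, ∃ i, (ε : Ordinal) ≤ f i := fun ε =>
    Ordinal.lt_lsub_iff.1 (by rw [hlsub]; exact ε.2)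
  choose gi hgi using hg
  let g : Set.Iio θ.ord → Σ i : ι, Set.Iio (Order.succ (f i)) := fun ε =>
    ⟨gi ε, ⟨ε.1, Order.lt_succ_iff.2 (hgi ε)⟩⟩
  have hginj : Function.Injective g := by
    intro a b hab
    exact Subtype.ext
      (congrArg (fun s : (Σ i : ι, Set.Iio (Order.succ (f i))) => (s.2 : Ordinal)) hab)
  exact regFilter_of_reg D θ (reg_of_inj D g hginj hσ)
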